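/- Let G be an MVR chain graph with vertex set V and chain components 𝒯, and let p be a strictly positive probability mass function on a finite product space ∏_{v ∈ V} S_v. If p satisfies the multivariate regression (MR) Markov property with respect to G (each independence required by MR1 and MR2 holds as a conditional independence under p), then p factorizes according to the directed acyclic graph of the chain components: for every x, p(x) = ∏_{T ∈ 𝒯} p_{T ∪ pa_D(T)}(x) / p_{pa_D(T)}(x), where p_A denotes the marginal of p on the coordinates in A and pa_D(T) is the union of the chain components that are parents of T. -/

import Mathlib

open scoped Classical

universe u

variable {V : Type u}

/-- A mixed graph: a set of directed edges and a set of bidirected edges on `V`. -/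
structure MixedGraph (V : Type u) where
  /-- `dir u v` means there is a directed edge `u → v`. -/
  dir : V → V → Prop
  /-- `bi u v` means there is a bidirected edge `u ↔ v`. -/
  bi : V → V → Prop

namespace MixedGraph

/-- The basic well-formedness conditions of a mixed graph with only directed and
bidirected edges: `bi` is symmetric and irreflexive, `dir` is irreflexive, there are no
self-loops and at most one edge between each pair of distinct vertices. -/
def IsMixed (G : MixedGraph V) : Prop :=
  (∀ u v, G.bi u v → G.bi v u) ∧
  (∀ v, ¬ G.bi v v) ∧
  (∀ v, ¬ G.dir v v) ∧
  (∀ u v, G.dir u v → ¬ G.bi u v) ∧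
  (∀ u v, G.dir u v → ¬ G.dir v u)

/-- A partially directed cycle: vertices `f 0, f 1, …, f n = f 0` (`n ≥ 2`,
`f 0, …, f (n-1)` distinct) such that every step is a directed edge `f i → f (i+1)` or a
bidirected edge, and at least one step is directed. -/
def HasPDCycle (G : MixedGraph V) : Prop :=
  ∃ (n : ℕ) (f : ℕ → V), 2 ≤ n ∧ f n = f 0 ∧
    (∀ i j, i < n → j < n → f i = f j → i = j) ∧
    (∀ i, i < n → G.dir (f i) (f (i + 1)) ∨ G.bi (f i) (f (i + 1))) ∧
    (∃ i, i < n ∧ G.dir (f i) (f (i + 1)))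

/-- An MVR chain graph: a mixed graph containing only directed and bidirected edges and
having no partially directed cycle. -/
def IsMVR (G : MixedGraph V) : Prop := G.IsMixed ∧ ¬ G.HasPDCycle

/-- `G.anc u v` : `u` is an ancestor of `v` (`u = v` or there is a directed path
`u → ⋯ → v`). -/
def anc (G : MixedGraph V) (u v : V) : Prop := Relation.ReflTransGen G.dir u v

/-- `an(S)`: the set of ancestors of members of `S`. -/
def ancSet (G : MixedGraph V) (S : Set V) : Set V := {u | ∃ s ∈ S, G.anc u s}

/-- The descendants of `v`. -/
def de (G : MixedGraph V) (v : V) : Set V := {u | G.anc v u}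

/-- The non-descendants of `v` : `V \ (de(v) ∪ {v})`. -/
def nd (G : MixedGraph V) (v : V) : Set V := {u | ¬ G.anc v u}

/-- Adjacency: some edge joins `u` and `v`. -/
def adj (G : MixedGraph V) (u v : V) : Prop := G.dir u v ∨ G.dir v u ∨ G.bi u v

/-- `f 0, …, f n` is a walk: consecutive vertices are joined by some edge. -/
def IsWalk (G : MixedGraph V) (n : ℕ) (f : ℕ → V) : Prop :=
  ∀ i, i < n → G.adj (f i) (f (i + 1))

/-- `f 0, …, f n` is a path: a walk with distinct vertices. -/
def IsPath (G : MixedGraph V) (n : ℕ) (f : ℕ → V) : Prop :=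
  G.IsWalk n f ∧ ∀ i j, i ≤ n → j ≤ n → f i = f j → i = j

/-- The nonendpoint vertex `f i` (`0 < i < n`) of a path is a collider: both incident
edges of the path have an arrowhead at `f i`, i.e. the edge from `f (i-1)` is
`f (i-1) → f i` or `f (i-1) ↔ f i`, and the edge to `f (i+1)` is `f i ← f (i+1)` or
`f i ↔ f (i+1)`. -/
def IsColliderAt (G : MixedGraph V) (f : ℕ → V) (i : ℕ) : Prop :=
  (G.dir (f (i - 1)) (f i) ∨ G.bi (f (i - 1)) (f i)) ∧
  (G.dir (f (i + 1)) (f i) ∨ G.bi (f i) (f (i + 1)))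

/-- A path between `α` and `β` is m-connecting given `Z` if every noncollider on it is
not in `Z` and every collider on it is in `an(Z)`. -/
def MConnecting (G : MixedGraph V) (Z : Set V) (α β : V) : Prop :=
  ∃ (n : ℕ) (f : ℕ → V), G.IsPath n f ∧ f 0 = α ∧ f n = β ∧
    ∀ i, 0 < i → i < n →
      (G.IsColliderAt f i → f i ∈ G.ancSet Z) ∧ (¬ G.IsColliderAt f i → f i ∉ Z)

/-- `X` and `Y` are m-separated given `Z`: no m-connecting path given `Z` joins a vertex
of `X` to a vertex of `Y`. -/
def MSep (G : MixedGraph V) (X Y Z : Set V) : Prop :=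
  ∀ α ∈ X, ∀ β ∈ Y, ¬ G.MConnecting Z α β

/-- The induced subgraph of `G` on the vertex set `A` (kept on the same vertex type:
only edges with both endpoints in `A` remain). -/
def induce (G : MixedGraph V) (A : Set V) : MixedGraph V where
  dir u v := u ∈ A ∧ v ∈ A ∧ G.dir u v
  bi u v := u ∈ A ∧ v ∈ A ∧ G.bi u v

/-- Two vertices are collider connected if joined by a path on which every nonendpoint
vertex is a collider (a single edge counts). -/
def ColliderConnected (G : MixedGraph V) (x y : V) : Prop :=
  ∃ (n : ℕ) (f : ℕ → V), 1 ≤ n ∧ G.IsPath n f ∧ f 0 = x ∧ f n = y ∧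
    ∀ i, 0 < i → i < n → G.IsColliderAt f i

end MixedGraph

/-- `Z` separates `X` from `Y` in the undirected graph with adjacency `E` : every path
from `X` to `Y` meets `Z`. -/
def UndirSep {V : Type u} (E : V → V → Prop) (X Y Z : Set V) : Prop :=
  ∀ (n : ℕ) (f : ℕ → V), (∀ i, i < n → E (f i) (f (i + 1))) →
    (∀ i j, i ≤ n → j ≤ n → f i = f j → i = j) →
    f 0 ∈ X → f n ∈ Y → ∃ i, i ≤ n ∧ f i ∈ Z

namespace MixedGraph

/-- Augmented-graph separation (m*-separation): `Z` separates `X` from `Y` in the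
augmented graph (whose edges join the collider-connected pairs) of the induced subgraph
of `G` on `an(X ∪ Y ∪ Z)`. -/
def AugSep (G : MixedGraph V) (X Y Z : Set V) : Prop :=
  UndirSep (fun a b => (G.induce (G.ancSet (X ∪ Y ∪ Z))).ColliderConnected a b) X Y Z

/-- Connectivity in the bidirected part of `G`. -/
def biConn (G : MixedGraph V) (u v : V) : Prop := Relation.ReflTransGen G.bi u v

/-- The chain component of `v`: the connected component of `v` in the bidirected part. -/
def chainComp (G : MixedGraph V) (v : V) : Set V := {u | G.biConn v u}

/-- `T` is a chain component of `G`. -/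
def IsChainComp (G : MixedGraph V) (T : Set V) : Prop := ∃ v, T = G.chainComp v

/-- The parents of a vertex: `pa_G(v) = {w : w → v}`. -/
def pa (G : MixedGraph V) (v : V) : Set V := {w | G.dir w v}

/-- The boundary of a vertex: parents and bidirected neighbours. -/
def bd (G : MixedGraph V) (v : V) : Set V := {w | G.dir w v ∨ G.bi w v}

/-- The parents of a set: `pa_G(A) = {w ∉ A : w → v for some v ∈ A}`. -/
def paSet (G : MixedGraph V) (A : Set V) : Set V := {w | w ∉ A ∧ ∃ v ∈ A, G.dir w v}

/-- `Nb_G(A)`: `A` together with all vertices joined to `A` by a bidirected edge. -/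
def Nb (G : MixedGraph V) (A : Set V) : Set V := A ∪ {w | ∃ v ∈ A, G.bi w v}

/-- The edge relation of the directed graph `D` of chain components:
`C₁ → C₂` iff they are distinct chain components and some directed edge of `G` joins a
vertex of `C₁` to a vertex of `C₂`. -/
def compRel (G : MixedGraph V) (C₁ C₂ : Set V) : Prop :=
  G.IsChainComp C₁ ∧ G.IsChainComp C₂ ∧ C₁ ≠ C₂ ∧ ∃ u ∈ C₁, ∃ v ∈ C₂, G.dir u v

/-- `pa_D(T)`: the union of the chain components that are parents of `T` in the directed
graph `D` of chain components. -/
def paD (G : MixedGraph V) (T : Set V) : Set V := {w | G.compRel (G.chainComp w) T}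

/-- `nd_D(T)`: the union of the chain components `T'` such that there is no directed path
from `T` to `T'` in the directed graph `D` of chain components. -/
def ndD (G : MixedGraph V) (T : Set V) : Set V :=
  {w | ¬ Relation.ReflTransGen G.compRel T (G.chainComp w)}

/-- Connectivity in the bidirected part of the induced subgraph on `A`. -/
def biConnIn (G : MixedGraph V) (A : Set V) (u v : V) : Prop :=
  Relation.ReflTransGen (fun a b => a ∈ A ∧ b ∈ A ∧ G.bi a b) u v

/-- `A` is connected: the bidirected part of the induced subgraph on `A` is connected
(and `A` is nonempty). -/
def ConnectedIn (G : MixedGraph V) (A : Set V) : Prop :=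
  A.Nonempty ∧ ∀ u ∈ A, ∀ v ∈ A, G.biConnIn A u v

/-- `dis_{G_A}(x)`: the connected component (district) of `x` in the bidirected part of
the induced subgraph `G_A`. -/
def disIn (G : MixedGraph V) (A : Set V) (x : V) : Set V := {y | G.biConnIn A x y}

/-- The Markov blanket `mb(x, A) = pa_G(dis_{G_A}(x)) ∪ (dis_{G_A}(x) \ {x})`. -/
def mb (G : MixedGraph V) (x : V) (A : Set V) : Set V :=
  G.paSet (G.disIn A x) ∪ (G.disIn A x \ {x})

/-- `pre(T)` relative to an order `r` on chain components: the union of all chain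
components strictly preceding `T`. -/
def pre (G : MixedGraph V) (r : Set V → Set V → Prop) (T : Set V) : Set V :=
  {v | r (G.chainComp v) T}

/-- `r` is a strict total order on the chain components of `G` that is consistent with
the directed graph `D` of chain components, i.e. `pa_D(T) ⊆ pre(T)` for all `T`. -/
def ConsistentCompOrder (G : MixedGraph V) (r : Set V → Set V → Prop) : Prop :=
  (∀ C, ¬ r C C) ∧
  (∀ C₁ C₂ C₃, r C₁ C₂ → r C₂ C₃ → r C₁ C₃) ∧
  (∀ C₁ C₂, G.IsChainComp C₁ → G.IsChainComp C₂ → C₁ = C₂ ∨ r C₁ C₂ ∨ r C₂ C₁) ∧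
  (∀ T, G.IsChainComp T → G.paD T ⊆ G.pre r T)

/-- A total order `r` on the vertices of `G` is consistent with `G` if `r x y` implies
that `y` is not an ancestor of `x`. -/
def ConsistentVertexOrder (G : MixedGraph V) (r : V → V → Prop) : Prop :=
  IsStrictTotalOrder V r ∧ ∀ x y, r x y → ¬ G.anc y x

end MixedGraph

section IndepModel

variable {V : Type u} (I : Set V → Set V → Set V → Prop)

/-- Symmetry: `X ⫫ Y | Z  ⇒  Y ⫫ X | Z`. -/
def IndepSymm : Prop := ∀ X Y Z : Set V, I X Y Z → I Y X Z

/-- Decomposition: `X ⫫ Y ∪ W | Z  ⇒  X ⫫ Y | Z`. -/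
def IndepDecomp : Prop := ∀ X Y W Z : Set V, I X (Y ∪ W) Z → I X Y Z

/-- Weak union: `X ⫫ Y ∪ W | Z  ⇒  X ⫫ Y | Z ∪ W`. -/
def IndepWeakUnion : Prop := ∀ X Y W Z : Set V, I X (Y ∪ W) Z → I X Y (Z ∪ W)

/-- Contraction: `X ⫫ Y | Z ∪ W` and `X ⫫ W | Z` imply `X ⫫ Y ∪ W | Z`. -/
def IndepContraction : Prop := ∀ X Y W Z : Set V, I X Y (Z ∪ W) → I X W Z → I X (Y ∪ W) Z

/-- Composition: `X ⫫ Y | Z` and `X ⫫ W | Z` imply `X ⫫ Y ∪ W | Z`. -/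
def IndepComposition : Prop := ∀ X Y W Z : Set V, I X Y Z → I X W Z → I X (Y ∪ W) Z

/-- A semi-graphoid satisfies symmetry, decomposition, weak union and contraction. -/
def SemiGraphoid : Prop := IndepSymm I ∧ IndepDecomp I ∧ IndepWeakUnion I ∧ IndepContraction I

/-- A compositional semi-graphoid additionally satisfies composition. -/
def CompositionalSemiGraphoid : Prop := SemiGraphoid I ∧ IndepComposition I

variable (G : MixedGraph V)

/-- The global Markov property via m-separation: whenever `X` and `Y` are m-separated
given `Z` in `G` (for pairwise disjoint `X, Y, Z` with `X, Y` nonempty), `⟨X, Y | Z⟩ ∈ ℐ`. -/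
def GlobalMarkovM : Prop :=
  ∀ X Y Z : Set V, X.Nonempty → Y.Nonempty →
    Disjoint X Y → Disjoint X Z → Disjoint Y Z → G.MSep X Y Z → I X Y Z

/-- The global Markov property via augmented-graph separation: whenever `Z` separates `X`
from `Y` in the augmented graph of the induced subgraph of `G` on `an(X ∪ Y ∪ Z)` (for
pairwise disjoint `X, Y, Z` with `X, Y` nonempty), `⟨X, Y | Z⟩ ∈ ℐ`. -/
def GlobalMarkovAug : Prop :=
  ∀ X Y Z : Set V, X.Nonempty → Y.Nonempty →
    Disjoint X Y → Disjoint X Z → Disjoint Y Z → G.AugSep X Y Z → I X Y Z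

/-- The block-recursive Markov property of type IV. -/
def TypeIVMarkov : Prop :=
  ∀ T : Set V, G.IsChainComp T →
    (I T (G.ndD T \ G.paD T) (G.paD T)) ∧
    (∀ A : Set V, A ⊆ T → I A (G.paD T \ G.paSet A) (G.paSet A)) ∧
    (∀ A : Set V, A ⊆ T → G.ConnectedIn A → I A (T \ G.Nb A) (G.paD T))

/-- The multivariate regression (MR) Markov property with respect to the order `r` on the
chain components: (MR1) for connected `A ⊆ T`, `A ⫫ pre(T) \ pa_G(A) | pa_G(A)`; (MR2)
distinct connected components `A₁, A₂` of `A ⊆ T` satisfy `A₁ ⫫ A₂ | pre(T)`. -/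
def MRMarkov (r : Set V → Set V → Prop) : Prop :=
  ∀ T : Set V, G.IsChainComp T → ∀ A : Set V, A ⊆ T →
    (G.ConnectedIn A → I A (G.pre r T \ G.paSet A) (G.paSet A)) ∧
    (∀ x ∈ A, ∀ y ∈ A, G.disIn A x ≠ G.disIn A y →
      I (G.disIn A x) (G.disIn A y) (G.pre r T))

/-- The ordered local Markov property with respect to a total vertex order `r` : for every
vertex `x` and every ancestrally closed `A` with `x ∈ A ⊆ pre_{G,≺}(x)`,
`{x} ⫫ A \ (mb(x,A) ∪ {x}) | mb(x,A)`. -/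
def OrderedLocalMarkov (r : V → V → Prop) : Prop :=
  ∀ (x : V) (A : Set V), G.ancSet A = A → x ∈ A → A ⊆ {v | r v x ∨ v = x} →
    I {x} (A \ (G.mb x A ∪ {x})) (G.mb x A)

/-- The alternative local Markov property: for every vertex `v`,
`{v} ⫫ nd(v) \ bd(v) | pa_G(v)`. -/
def AltLocalMarkov : Prop :=
  ∀ v : V, I {v} (G.nd v \ G.bd v) (G.pa v)

end IndepModel

section Probability

variable {V : Type u} [Fintype V] [DecidableEq V] {S : V → Type} [∀ v, Fintype (S v)]

/-- The marginal of a pmf `p` on `∏ v, S v` over the coordinates in `A`, evaluated at the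
configuration `x` : the sum of `p` over all configurations agreeing with `x` on `A`. -/
noncomputable def marginal (p : (∀ v, S v) → ℝ) (A : Set V) (x : ∀ v, S v) : ℝ :=
  ∑ y : ∀ v, S v, if ∀ v ∈ A, y v = x v then p y else 0

/-- Conditional independence of the coordinate tuples on `X` and on `Y` given those on
`Z`, under the pmf `p` : `p_{X∪Y∪Z}(x) · p_Z(x) = p_{X∪Z}(x) · p_{Y∪Z}(x)` for all `x`. -/
def CondIndep (p : (∀ v, S v) → ℝ) (X Y Z : Set V) : Prop :=
  ∀ x : ∀ v, S v,
    marginal p (X ∪ Y ∪ Z) x * marginal p Z x = marginal p (X ∪ Z) x * marginal p (Y ∪ Z) x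

end Probability

section Helpers

variable {V : Type u} [Fintype V] [DecidableEq V] {S : V → Type} [∀ v, Fintype (S v)]

lemma marginal_pos (p : (∀ v, S v) → ℝ) (hpos : ∀ x, 0 < p x) (A : Set V) (x : ∀ v, S v) :
    0 < marginal p A x := by
  have hx : (if ∀ v ∈ A, x v = x v then p x else 0) = p x := by simp
  calc (0:ℝ) < p x := hpos x
    _ = (if ∀ v ∈ A, x v = x v then p x else 0) := hx.symm
    _ ≤ marginal p A x := by
        apply Finset.single_le_sum (f := fun y => if ∀ v ∈ A, y v = x v then p y else 0)
        · intro y _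
          split_ifs
          exacts [(hpos y).le, le_refl 0]
        · exact Finset.mem_univ x

lemma marginal_congr (p : (∀ v, S v) → ℝ) {A : Set V} {x y : ∀ v, S v}
    (h : ∀ v ∈ A, y v = x v) : marginal p A y = marginal p A x := by
  unfold marginal
  refine Finset.sum_congr rfl fun z _ => ?_
  refine if_congr ?_ rfl rfl
  constructor <;> intro h' v hv
  · rw [h' v hv, h v hv]
  · rw [h' v hv, h v hv]

lemma marginal_univ (p : (∀ v, S v) → ℝ) (x : ∀ v, S v) :
    marginal p Set.univ x = p x := by
  unfold marginal
  rw [Finset.sum_eq_single x]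
  · simp
  · intro y _ hy
    rw [if_neg]
    intro h
    exact hy (funext fun v => h v (Set.mem_univ v))
  · intro h; exact absurd (Finset.mem_univ _) h

lemma marginal_empty (p : (∀ v, S v) → ℝ) (hsum : ∑ x : ∀ v, S v, p x = 1) (x : ∀ v, S v) :
    marginal p (∅ : Set V) x = 1 := by
  unfold marginal
  simp [hsum]

lemma margStep (p : (∀ v, S v) → ℝ) (A B : Set V) (hAB : ∀ v ∈ A, v ∉ B) (x : ∀ v, S v) :
    marginal p A x = ∑ y : ∀ v, S v,
      if ∀ v, v ∉ B → y v = x v then marginal p (A ∪ B) y else 0 := by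
  have step : ∀ y : ∀ v, S v,
      (if (∀ v, v ∉ B → y v = x v) then marginal p (A ∪ B) y else 0)
      = ∑ z : ∀ v, S v, if ((∀ v, v ∉ B → y v = x v) ∧ ∀ v ∈ A ∪ B, z v = y v) then p z else 0 := by
    intro y
    by_cases h : ∀ v, v ∉ B → y v = x v
    · rw [if_pos h]
      unfold marginal
      refine Finset.sum_congr rfl fun z _ => ?_
      rw [if_congr (and_iff_right h) rfl rfl]
      congr
    · rw [if_neg h]
      refine (Finset.sum_eq_zero fun z _ => ?_).symm
      rw [if_neg]
      rintro ⟨h1, -⟩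
      exact h h1
  rw [Finset.sum_congr rfl fun y _ => step y, Finset.sum_comm]
  unfold marginal
  refine (Finset.sum_congr rfl fun z _ => ?_).symm
  by_cases hz : ∀ v ∈ A, z v = x v
  · rw [Finset.sum_eq_single (fun v => if v ∈ B then z v else x v)]
    · rw [if_pos hz, if_pos]
      constructor
      · intro v hv; simp [hv]
      · intro v hv
        by_cases hvB : v ∈ B
        · simp [hvB]
        · simp only [hvB, if_false]
          rcases hv with hvA | hvB'
          · exact hz v hvA
          · exact absurd hvB' hvB
    · intro y _ hy
      rw [if_neg]
      rintro ⟨h1, h2⟩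
      apply hy
      funext v
      by_cases hvB : v ∈ B
      · simp only [hvB, if_true]; exact (h2 v (Or.inr hvB)).symm
      · simp only [hvB, if_false]; exact h1 v hvB
    · intro h; exact absurd (Finset.mem_univ _) h
  · rw [if_neg hz]
    apply Finset.sum_eq_zero
    intro y _
    rw [if_neg]
    rintro ⟨h1, h2⟩
    apply hz
    intro v hv
    rw [h2 v (Or.inl hv), h1 v (hAB v hv)]

end Helpers

section GraphHelpers

variable {V : Type u}

lemma chainComp_self (G : MixedGraph V) (v : V) : v ∈ G.chainComp v :=
  Relation.ReflTransGen.refl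

lemma chainComp_eq (G : MixedGraph V) (hbs : ∀ u v, G.bi u v → G.bi v u)
    {u w : V} (h : u ∈ G.chainComp w) : G.chainComp w = G.chainComp u := by
  have hsym : Symmetric G.bi := fun a b hab => hbs a b hab
  have hwu : G.biConn w u := h
  have huw : G.biConn u w := (@Relation.ReflTransGen.symmetric _ _ ⟨fun a b h => hsym h⟩).symm _ _ hwu
  ext z
  constructor
  · intro hz; exact huw.trans hz
  · intro hz; exact hwu.trans hz

lemma connectedIn_chainComp (G : MixedGraph V) (hbs : ∀ u v, G.bi u v → G.bi v u)
    (v : V) : G.ConnectedIn (G.chainComp v) := by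
  have hsym : Symmetric G.bi := fun a b hab => hbs a b hab
  have aux : ∀ {w : V}, G.biConn v w → G.biConnIn (G.chainComp v) v w := by
    intro w h
    induction h with
    | refl => exact Relation.ReflTransGen.refl
    | @tail b c hvb hbc ih =>
        exact ih.tail ⟨hvb, hvb.tail hbc, hbc⟩
  have hsymIn : Symmetric (fun a b => a ∈ G.chainComp v ∧ b ∈ G.chainComp v ∧ G.bi a b) :=
    fun a b ⟨ha, hb, hab⟩ => ⟨hb, ha, hbs a b hab⟩
  refine ⟨⟨v, chainComp_self G v⟩, fun u hu w hw => ?_⟩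
  exact ((@Relation.ReflTransGen.symmetric _ _ ⟨fun a b h => hsymIn h⟩).symm _ _ (aux hu)).trans (aux hw)

lemma exists_max_comp (G : MixedGraph V) (r : Set V → Set V → Prop)
    (htrans : ∀ C₁ C₂ C₃, r C₁ C₂ → r C₂ C₃ → r C₁ C₃)
    (htri : ∀ C₁ C₂, G.IsChainComp C₁ → G.IsChainComp C₂ → C₁ = C₂ ∨ r C₁ C₂ ∨ r C₂ C₁)
    (s : Finset (Set V)) (hne : s.Nonempty) (hcc : ∀ T ∈ s, G.IsChainComp T) :
    ∃ T ∈ s, ∀ T' ∈ s, T' ≠ T → r T' T := by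
  classical
  induction s using Finset.induction_on with
  | empty => exact absurd hne (by simp)
  | @insert a s ha ih =>
      by_cases hs : s.Nonempty
      · obtain ⟨T, hT, hmax⟩ := ih hs (fun T h => hcc T (Finset.mem_insert_of_mem h))
        have hTcc := hcc T (Finset.mem_insert_of_mem hT)
        have hacc := hcc a (Finset.mem_insert_self a s)
        rcases htri a T hacc hTcc with he | hr1 | hr2
        · refine ⟨T, Finset.mem_insert_of_mem hT, fun T' hT' hne' => ?_⟩
          rcases Finset.mem_insert.mp hT' with rfl | hT's
          · exact absurd he hne'
          · exact hmax T' hT's hne'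
        · refine ⟨T, Finset.mem_insert_of_mem hT, fun T' hT' hne' => ?_⟩
          rcases Finset.mem_insert.mp hT' with rfl | hT's
          · exact hr1
          · exact hmax T' hT's hne'
        · refine ⟨a, Finset.mem_insert_self a s, fun T' hT' hne' => ?_⟩
          rcases Finset.mem_insert.mp hT' with rfl | hT's
          · exact absurd rfl hne'
          · by_cases hTT : T' = T
            · exact hTT ▸ hr2
            · exact htrans T' T a (hmax T' hT's hTT) hr2
      · have hse : s = ∅ := Finset.not_nonempty_iff_eq_empty.mp hs
        subst hse
        refine ⟨a, Finset.mem_insert_self a ∅, fun T' hT' hne' => ?_⟩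
        rcases Finset.mem_insert.mp hT' with rfl | h
        · exact absurd rfl hne'
        · exact absurd h (by simp)

end GraphHelpers

section Telescope

variable {V : Type u} [Fintype V] [DecidableEq V] {S : V → Type} [∀ v, Fintype (S v)]

lemma telescope (G : MixedGraph V) (r : Set V → Set V → Prop)
    (hirr : ∀ C, ¬ r C C) (htrans : ∀ C₁ C₂ C₃, r C₁ C₂ → r C₂ C₃ → r C₁ C₃)
    (htri : ∀ C₁ C₂, G.IsChainComp C₁ → G.IsChainComp C₂ → C₁ = C₂ ∨ r C₁ C₂ ∨ r C₂ C₁)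
    (hbs : ∀ u v, G.bi u v → G.bi v u)
    (p : (∀ v, S v) → ℝ) (hpos : ∀ y, 0 < p y) (hsum : ∑ y : ∀ v, S v, p y = 1)
    (x : ∀ v, S v) :
    ∀ (n : ℕ) (s : Finset (Set V)), s.card = n →
      (∀ T ∈ s, G.IsChainComp T) →
      (∀ v : V, ∀ T ∈ s, r (G.chainComp v) T → G.chainComp v ∈ s) →
      ∏ T ∈ s, marginal p (T ∪ G.pre r T) x / marginal p (G.pre r T) x
        = marginal p (⋃₀ (↑s : Set (Set V))) x := by
  intro n
  induction n with
  | zero =>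
      intro s hcard _ _
      rw [Finset.card_eq_zero.mp hcard]
      simp only [Finset.prod_empty, Finset.coe_empty, Set.sUnion_empty]
      exact (marginal_empty p hsum x).symm
  | succ n ih =>
      intro s hcard hcc hdc
      have hne : s.Nonempty := Finset.card_pos.mp (by omega)
      obtain ⟨T, hT, hmax⟩ := exists_max_comp G r htrans htri s hne hcc
      set s' := s.erase T with hs'
      have hcard' : s'.card = n := by
        rw [hs', Finset.card_erase_of_mem hT, hcard]
        omega
      have hcc' : ∀ T' ∈ s', G.IsChainComp T' := fun T' h => hcc T' (Finset.mem_of_mem_erase h)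
      have hdc' : ∀ v : V, ∀ T' ∈ s', r (G.chainComp v) T' → G.chainComp v ∈ s' := by
        intro v T' hT' hrv
        have h1 : T' ∈ s := Finset.mem_of_mem_erase hT'
        have h2 : T' ≠ T := (Finset.mem_erase.mp hT').1
        have hmem : G.chainComp v ∈ s := hdc v T' h1 hrv
        refine Finset.mem_erase.mpr ⟨?_, hmem⟩
        intro he
        exact hirr T (htrans T T' T (he ▸ hrv) (hmax T' h1 h2))
      have hpre : G.pre r T = ⋃₀ (↑s' : Set (Set V)) := by
        ext v
        constructor
        · intro hv
          refine ⟨G.chainComp v, ?_, chainComp_self G v⟩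
          have hmem : G.chainComp v ∈ s := hdc v T hT hv
          have hne' : G.chainComp v ≠ T := fun he => hirr T (he ▸ hv)
          exact Finset.mem_coe.mpr (Finset.mem_erase.mpr ⟨hne', hmem⟩)
        · rintro ⟨T', hT's, hvT'⟩
          have hT's' := Finset.mem_coe.mp hT's
          have h1 : T' ∈ s := Finset.mem_of_mem_erase hT's'
          have h2 : T' ≠ T := (Finset.mem_erase.mp hT's').1
          obtain ⟨u, hu⟩ := hcc T' h1
          have hTv : T' = G.chainComp v := by
            rw [hu]
            exact chainComp_eq G hbs (hu ▸ hvT')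
          show r (G.chainComp v) T
          rw [← hTv]
          exact hmax T' h1 h2
      have hUs : ⋃₀ (↑s : Set (Set V)) = T ∪ ⋃₀ (↑s' : Set (Set V)) := by
        ext w
        constructor
        · rintro ⟨T', hT's, hw⟩
          by_cases h : T' = T
          · exact Or.inl (h ▸ hw)
          · exact Or.inr ⟨T', Finset.mem_coe.mpr
              (Finset.mem_erase.mpr ⟨h, Finset.mem_coe.mp hT's⟩), hw⟩
        · rintro (hw | ⟨T', hT's, hw⟩)
          · exact ⟨T, Finset.mem_coe.mpr hT, hw⟩
          · exact ⟨T', Finset.mem_coe.mpr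
              (Finset.mem_of_mem_erase (Finset.mem_coe.mp hT's)), hw⟩
      rw [← Finset.mul_prod_erase s _ hT, ← hs', ih s' hcard' hcc' hdc', hpre, hUs, ← hpre]
      have hpne : marginal p (G.pre r T) x ≠ 0 := (marginal_pos p hpos _ x).ne'
      field_simp

end Telescope

/-- Let `G` be an MVR chain graph on a finite vertex set `V` and `p` a
strictly positive pmf on the finite product space `∏ v, S v`. If `p` satisfies the
multivariate regression (MR) Markov property with respect to `G` (each independence
required by MR1 and MR2 holds as a conditional independence under `p`), then `p`
factorizes according to the directed acyclic graph of the chain components: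
`p(x) = ∏_{T ∈ 𝒯} p_{T ∪ pa_D(T)}(x) / p_{pa_D(T)}(x)`. -/
theorem factorization_over_component_dag {V : Type u} [Fintype V] [DecidableEq V]
    (G : MixedGraph V) (hG : G.IsMVR)
    (S : V → Type) [∀ v, Fintype (S v)] [∀ v, Nonempty (S v)]
    (p : (∀ v, S v) → ℝ) (hpos : ∀ x, 0 < p x) (hsum : ∑ x : ∀ v, S v, p x = 1)
    (r : Set V → Set V → Prop) (hr : G.ConsistentCompOrder r)
    (hMR : MRMarkov (fun X Y Z => CondIndep p X Y Z) G r) :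
    ∀ x : ∀ v, S v,
      p x = ∏ T ∈ Finset.univ.image (fun v => G.chainComp v),
        marginal p (T ∪ G.paD T) x / marginal p (G.paD T) x := by
  intro x
  classical
  obtain ⟨⟨hbs, -, -, -, -⟩, -⟩ := hG
  obtain ⟨hirr, htrans, htri, hpaD_pre⟩ := hr
  have key : ∀ T : Set V, G.IsChainComp T →
      marginal p (T ∪ G.paD T) x / marginal p (G.paD T) x
        = marginal p (T ∪ G.pre r T) x / marginal p (G.pre r T) x := by
    intro T hT
    have hconn : G.ConnectedIn T := by
      obtain ⟨v, rfl⟩ := hT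
      exact connectedIn_chainComp G hbs v
    have hmemEq : ∀ w ∈ T, G.chainComp w = T := by
      obtain ⟨v, rfl⟩ := hT
      intro w hw
      exact (chainComp_eq G hbs hw).symm
    have hpaDpre : G.paD T ⊆ G.pre r T := hpaD_pre T hT
    have hpa_paD : G.paSet T ⊆ G.paD T := by
      rintro w ⟨hwT, v', hv', hdir⟩
      refine ⟨⟨w, rfl⟩, hT, ?_, w, chainComp_self G w, v', hv', hdir⟩
      intro he
      exact hwT (he ▸ chainComp_self G w)
    have hpa_pre : G.paSet T ⊆ G.pre r T := hpa_paD.trans hpaDpre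
    have hT_pre : ∀ w ∈ T, w ∉ G.pre r T := by
      intro w hw hwpre
      have h1 : G.chainComp w = T := hmemEq w hw
      have h2 : r (G.chainComp w) T := hwpre
      rw [h1] at h2
      exact hirr T h2
    have hH := (hMR T hT T subset_rfl).1 hconn
    have e1 : T ∪ (G.pre r T \ G.paSet T) ∪ G.paSet T = T ∪ G.pre r T := by
      rw [Set.union_assoc, Set.diff_union_of_subset hpa_pre]
    have e2 : (G.pre r T \ G.paSet T) ∪ G.paSet T = G.pre r T :=
      Set.diff_union_of_subset hpa_pre
    have H' : ∀ y, marginal p (T ∪ G.pre r T) y * marginal p (G.paSet T) y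
        = marginal p (T ∪ G.paSet T) y * marginal p (G.pre r T) y := by
      intro y
      have hy := hH y
      rwa [e1, e2] at hy
    set B := G.pre r T \ G.paD T with hB
    have hd1 : ∀ w ∈ T ∪ G.paD T, w ∉ B := by
      rintro w (hw | hw) ⟨hw1, hw2⟩
      · exact hT_pre w hw hw1
      · exact hw2 hw
    have hd2 : ∀ w ∈ G.paD T, w ∉ B := fun w hw h => h.2 hw
    have e3 : (T ∪ G.paD T) ∪ B = T ∪ G.pre r T := by
      rw [hB, Set.union_assoc, Set.union_diff_cancel hpaDpre]
    have e4 : G.paD T ∪ B = G.pre r T := by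
      rw [hB, Set.union_diff_cancel hpaDpre]
    have eq1 := margStep p (T ∪ G.paD T) B hd1 x
    rw [e3] at eq1
    have eq2 := margStep p (G.paD T) B hd2 x
    rw [e4] at eq2
    have hD : marginal p (T ∪ G.paD T) x * marginal p (G.paSet T) x
        = marginal p (T ∪ G.paSet T) x * marginal p (G.paD T) x := by
      rw [eq1, eq2, Finset.sum_mul, Finset.mul_sum]
      refine Finset.sum_congr rfl fun y _ => ?_
      by_cases hc : ∀ w, w ∉ B → y w = x w
      · rw [if_pos hc, if_pos hc]
        have hpay : marginal p (G.paSet T) y = marginal p (G.paSet T) x :=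
          marginal_congr p (fun w hw => hc w (hd2 w (hpa_paD hw)))
        have hTpay : marginal p (T ∪ G.paSet T) y = marginal p (T ∪ G.paSet T) x := by
          refine marginal_congr p (fun w hw => hc w ?_)
          rcases hw with hw | hw
          · exact fun hwB => hT_pre w hw hwB.1
          · exact hd2 w (hpa_paD hw)
        calc marginal p (T ∪ G.pre r T) y * marginal p (G.paSet T) x
            = marginal p (T ∪ G.pre r T) y * marginal p (G.paSet T) y := by rw [hpay]
          _ = marginal p (T ∪ G.paSet T) y * marginal p (G.pre r T) y := H' y
          _ = marginal p (T ∪ G.paSet T) x * marginal p (G.pre r T) y := by rw [hTpay]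
      · rw [if_neg hc, if_neg hc]
        ring
    rw [div_eq_div_iff (marginal_pos p hpos _ x).ne' (marginal_pos p hpos _ x).ne']
    have hpane : marginal p (G.paSet T) x ≠ 0 := (marginal_pos p hpos _ x).ne'
    apply mul_left_cancel₀ hpane
    linear_combination (marginal p (G.pre r T) x) * hD - (marginal p (G.paD T) x) * (H' x)
  have hccS : ∀ T ∈ Finset.univ.image (fun v => G.chainComp v), G.IsChainComp T := by
    intro T hTmem
    obtain ⟨v, -, hv⟩ := Finset.mem_image.mp hTmem
    exact ⟨v, hv.symm⟩
  have hdcS : ∀ v : V, ∀ T ∈ Finset.univ.image (fun v => G.chainComp v),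
      r (G.chainComp v) T → G.chainComp v ∈ Finset.univ.image (fun v => G.chainComp v) :=
    fun v T _ _ => Finset.mem_image.mpr ⟨v, Finset.mem_univ v, rfl⟩
  have hU : ⋃₀ (↑(Finset.univ.image (fun v => G.chainComp v)) : Set (Set V))
      = (Set.univ : Set V) := by
    ext w
    simp only [Set.mem_univ, iff_true]
    exact ⟨G.chainComp w,
      Finset.mem_coe.mpr (Finset.mem_image.mpr ⟨w, Finset.mem_univ w, rfl⟩),
      chainComp_self G w⟩
  have htel := telescope G r hirr htrans htri hbs p hpos hsum x
    (Finset.univ.image (fun v => G.chainComp v)).card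
    (Finset.univ.image (fun v => G.chainComp v)) rfl hccS hdcS
  rw [hU, marginal_univ] at htel
  rw [Finset.prod_congr rfl (fun T hTmem => key T (hccS T hTmem)), htel]
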